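/- Let Φ denote the standard normal CDF, fix C > 0, and define γ(x) = 1 - Φ(Φ⁻¹(1-x) - C) for x ∈ (0,1). Then for all 0 < p < α < 1 one has p/α < γ(p)/γ(α); equivalently, γ(x)/x is strictly decreasing in x. -/

import Mathlib

open Real MeasureTheory

/-- Standard normal CDF. -/
noncomputable def Phi (x : ℝ) : ℝ :=
  (Real.sqrt (2 * Real.pi))⁻¹ * ∫ t in Set.Iic x, Real.exp (-t ^ 2 / 2)

lemma phiD_integrable : Integrable (fun t : ℝ => Real.exp (-t ^ 2 / 2)) := by
  have h := integrable_exp_neg_mul_sq (b := (2⁻¹ : ℝ)) (by norm_num)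
  convert h using 2 with t
  ring_nf

lemma phiD_total : (∫ t : ℝ, Real.exp (-t ^ 2 / 2)) = Real.sqrt (2 * Real.pi) := by
  have h := integral_gaussian (2⁻¹ : ℝ)
  rw [show Real.pi / (2⁻¹ : ℝ) = 2 * Real.pi by ring] at h
  rw [← h]; congr 1 with t; ring_nf

noncomputable def Gtail (x : ℝ) : ℝ := ∫ t in Set.Ioi x, Real.exp (-t ^ 2 / 2)

lemma GT_pos (x : ℝ) : 0 < Gtail x := by
  rw [Gtail, setIntegral_pos_iff_support_of_nonneg_ae]
  · have : Function.support (fun t : ℝ => Real.exp (-t ^ 2 / 2)) = Set.univ := by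
      ext t; simp [Real.exp_ne_zero]
    rw [this, Set.univ_inter, Real.volume_Ioi]
    exact ENNReal.zero_lt_top
  · exact ae_of_all _ fun t => (Real.exp_pos _).le
  · exact phiD_integrable.integrableOn

lemma Gtail_shift (x C : ℝ) : (∫ t in Set.Ioi x, Real.exp (-(t - C) ^ 2 / 2)) = Gtail (x - C) := by
  have key : ∀ t : ℝ, (Set.Ioi x).indicator (fun t => Real.exp (-(t - C) ^ 2 / 2)) t
      = (Set.Ioi (x - C)).indicator (fun t => Real.exp (-t ^ 2 / 2)) (t - C) := by
    intro t
    by_cases h : t ∈ Set.Ioi x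
    · rw [Set.indicator_of_mem h, Set.indicator_of_mem (by simpa using sub_lt_sub_right h C)]
    · rw [Set.indicator_of_notMem h, Set.indicator_of_notMem (by
        simp only [Set.mem_Ioi] at h ⊢; intro hh; exact h (by linarith))]
  rw [Gtail, ← integral_indicator measurableSet_Ioi, ← integral_indicator measurableSet_Ioi]
  simp_rw [key]
  exact integral_sub_right_eq_self _ C

lemma GT_core {a b C : ℝ} (hab : a < b) (hC : 0 < C) :
    Gtail b * Gtail (a - C) < Gtail (b - C) * Gtail a := by
  set f : ℝ → ℝ := fun t => Real.exp (-t ^ 2 / 2) with hf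
  set g : ℝ → ℝ := fun t => Real.exp (-(t - C) ^ 2 / 2) with hg
  have hgi : Integrable g := phiD_integrable.comp_sub_right C
  set r : ℝ := Real.exp (b ^ 2 / 2 - (b - C) ^ 2 / 2) with hr
  have hrf : ∀ t : ℝ, r * f t = Real.exp (b ^ 2 / 2 - (b - C) ^ 2 / 2 + -t ^ 2 / 2) := by
    intro t; rw [hr, hf, ← Real.exp_add]
  -- splits
  have hsplitf : Gtail a = (∫ t in Set.Ioc a b, f t) + Gtail b := by
    rw [Gtail, Gtail, ← setIntegral_union Set.Ioc_disjoint_Ioi_same measurableSet_Ioi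
      phiD_integrable.integrableOn phiD_integrable.integrableOn,
      Set.Ioc_union_Ioi_eq_Ioi hab.le]
  have hsplitg : Gtail (a - C) = (∫ t in Set.Ioc a b, g t) + Gtail (b - C) := by
    rw [← Gtail_shift a C, ← Gtail_shift b C, ← setIntegral_union Set.Ioc_disjoint_Ioi_same
      measurableSet_Ioi hgi.integrableOn hgi.integrableOn, Set.Ioc_union_Ioi_eq_Ioi hab.le]
  set A1 := ∫ t in Set.Ioc a b, f t with hA1d
  set B1 := ∫ t in Set.Ioc a b, g t with hB1d
  -- A1 > 0
  have hA1 : 0 < A1 := by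
    rw [hA1d, setIntegral_pos_iff_support_of_nonneg_ae]
    · have : Function.support f = Set.univ := by ext t; simp [hf, Real.exp_ne_zero]
      rw [this, Set.univ_inter, Real.volume_Ioc]
      exact ENNReal.ofReal_pos.2 (by linarith)
    · exact ae_of_all _ fun t => (Real.exp_pos _).le
    · exact phiD_integrable.integrableOn
  have hA2 : 0 < Gtail b := GT_pos b
  -- B1 ≤ r * A1
  have hB1 : B1 ≤ r * A1 := by
    rw [hA1d, hB1d, ← integral_const_mul]
    refine setIntegral_mono_on hgi.integrableOn
      (phiD_integrable.const_mul r).integrableOn measurableSet_Ioc ?_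
    intro t ht
    rw [hrf t, hg]
    exact Real.exp_le_exp.2 (by nlinarith [ht.2])
  -- r * Gtail b < Gtail (b - C)
  have hB2 : r * Gtail b < Gtail (b - C) := by
    have hpos : 0 < ∫ t in Set.Ioi b, (g t - r * f t) := by
      rw [setIntegral_pos_iff_support_of_nonneg_ae]
      · have hsub : Set.Ioi b ⊆ Function.support (fun t => g t - r * f t) ∩ Set.Ioi b := by
          intro t ht
          refine ⟨?_, ht⟩
          have : r * f t < g t := by
            rw [hrf t, hg]
            exact Real.exp_lt_exp.2 (by nlinarith [Set.mem_Ioi.1 ht])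
          simp only [Function.mem_support]
          intro hzero; linarith
        refine lt_of_lt_of_le ?_ (measure_mono hsub)
        rw [Real.volume_Ioi]; exact ENNReal.zero_lt_top
      · refine (ae_restrict_iff' measurableSet_Ioi).2 (ae_of_all _ fun t ht => ?_)
        have : r * f t < g t := by
          rw [hrf t, hg]
          exact Real.exp_lt_exp.2 (by nlinarith [Set.mem_Ioi.1 ht])
        simp only [Pi.zero_apply]; linarith
      · exact (hgi.sub (phiD_integrable.const_mul r)).integrableOn
    have := integral_sub hgi.integrableOn ((phiD_integrable.const_mul r).integrableOn
      (s := Set.Ioi b))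
    have e1 : (∫ t in Set.Ioi b, g t) = Gtail (b - C) := Gtail_shift b C
    have e2 : (∫ t in Set.Ioi b, f t) = Gtail b := rfl
    rw [this, integral_const_mul, e1, e2] at hpos
    linarith
  rw [hsplitf, hsplitg]
  nlinarith [mul_le_mul_of_nonneg_left hB1 hA2.le, mul_lt_mul_of_pos_left hB2 hA1]

lemma sqrt2pi_pos : 0 < Real.sqrt (2 * Real.pi) := Real.sqrt_pos.2 (by positivity)

lemma Phi_tail (x : ℝ) : 1 - Phi x = (Real.sqrt (2 * Real.pi))⁻¹ * Gtail x := by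
  have h := intervalIntegral.integral_Iic_add_Ioi (b := x) phiD_integrable.integrableOn phiD_integrable.integrableOn
  rw [phiD_total] at h
  have hc : (Real.sqrt (2 * Real.pi))⁻¹ * Real.sqrt (2 * Real.pi) = 1 :=
    inv_mul_cancel₀ sqrt2pi_pos.ne'
  rw [Phi, Gtail]
  linear_combination -hc - (Real.sqrt (2 * Real.pi))⁻¹ * h

lemma Phi_mono : Monotone Phi := by
  intro x y hxy
  refine mul_le_mul_of_nonneg_left ?_ (by positivity)
  exact setIntegral_mono_set phiD_integrable.integrableOn
    (ae_of_all _ fun t => (Real.exp_pos _).le) (HasSubset.Subset.eventuallyLE (Set.Iic_subset_Iic.2 hxy))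

theorem power_ratio_decreasing (C : ℝ) (hC : 0 < C)
    (Phinv : ℝ → ℝ) (hPhinv : ∀ y ∈ Set.Ioo (0:ℝ) 1, Phi (Phinv y) = y)
    (γ : ℝ → ℝ) (hγ : ∀ x ∈ Set.Ioo (0:ℝ) 1, γ x = 1 - Phi (Phinv (1 - x) - C))
    (p α : ℝ) (hp : 0 < p) (hpα : p < α) (hα : α < 1) :
    p / α < γ p / γ α := by
  have hp1 : p < 1 := hpα.trans hα
  have hα0 : 0 < α := hp.trans hpα
  have hmp : (1 - p) ∈ Set.Ioo (0:ℝ) 1 := ⟨by linarith, by linarith⟩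
  have hmα : (1 - α) ∈ Set.Ioo (0:ℝ) 1 := ⟨by linarith, by linarith⟩
  set b := Phinv (1 - p) with hbdef
  set a := Phinv (1 - α) with hadef
  have hPb : Phi b = 1 - p := hPhinv _ hmp
  have hPa : Phi a = 1 - α := hPhinv _ hmα
  have hab : a < b := by
    by_contra h
    have := Phi_mono (not_lt.1 h)
    rw [hPa, hPb] at this; linarith
  set c := (Real.sqrt (2 * Real.pi))⁻¹ with hcdef
  have hcpos : 0 < c := inv_pos.2 sqrt2pi_pos
  have hpe : p = c * Gtail b := by rw [← Phi_tail, hPb]; ring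
  have hαe : α = c * Gtail a := by rw [← Phi_tail, hPa]; ring
  have hγp : γ p = c * Gtail (b - C) := by
    rw [hγ p ⟨hp, hp1⟩, ← hbdef, Phi_tail]
  have hγα : γ α = c * Gtail (a - C) := by
    rw [hγ α ⟨hα0, hα⟩, ← hadef, Phi_tail]
  rw [hγp, hγα, hpe, hαe, mul_div_mul_left _ _ hcpos.ne', mul_div_mul_left _ _ hcpos.ne']
  rw [div_lt_div_iff₀ (GT_pos a) (GT_pos (a - C))]
  exact GT_core hab hC
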